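/- Let k be a field of characteristic p > 2 and S = k⟨x,y⟩/(yx − xy − (1/2)x²). With α = −y^{p−2} + ∑_{i=1}^{p−2} (−1)^{i+1}((i+1)!/2^{i+1}) x^i y^{p−2−i}, one has (x+y)·α = −y^{p−1} − (1/2)x·y^{p−2} in S. -/

import Mathlib

/-- Lemma on α, part (b): `(x+y)·α = −y^{p−1} − (1/2)x·y^{p−2}`. -/
theorem stmt7 (k : Type*) [Field k] (p : ℕ) (hp : p.Prime) (hp2 : 2 < p) [CharP k p]
    (S : Type*) [Ring S] [Algebra k S] (x y : S)
    (hrel : y * x = x * y + (2 : k)⁻¹ • x ^ 2) :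
    (x + y) * (-(y ^ (p - 2)) +
        ∑ i ∈ Finset.Icc 1 (p - 2),
          (((-1 : k) ^ (i + 1) * ((i + 1).factorial : k)) / 2 ^ (i + 1)) •
            (x ^ i * y ^ (p - 2 - i))) =
      -(y ^ (p - 1)) - (2 : k)⁻¹ • (x * y ^ (p - 2)) := by
  have h2 : (2:k) ≠ 0 := by
    intro h
    have hd : (p:ℕ) ∣ 2 := (CharP.cast_eq_zero_iff k p 2).mp (by exact_mod_cast h)
    have := Nat.le_of_dvd (by norm_num) hd
    omega
  set n := p - 2 with hn
  have hpn : p = n + 2 := by omega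
  have hn1 : 1 ≤ n := by omega
  have hp1 : p - 1 = n + 1 := by omega
  rw [hp1]
  set c : ℕ → k := fun i => ((-1 : k) ^ (i + 1) * ((i + 1).factorial : k)) / 2 ^ (i + 1)
    with hcdef
  show (x + y) * (-(y ^ n) + ∑ i ∈ Finset.Icc 1 n, c i • (x ^ i * y ^ (n - i))) =
      -(y ^ (n+1)) - (2 : k)⁻¹ • (x * y ^ n)
  -- commuting lemma
  have hcomm : ∀ i : ℕ, y * x ^ i = x ^ i * y + (((i:k))/2) • x ^ (i+1) := by
    intro i
    induction i with
    | zero => simp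
    | succ m ih =>
      rw [pow_succ, ← mul_assoc, ih, add_mul, smul_mul_assoc, ← pow_succ,
        mul_assoc, hrel, mul_add, mul_smul_comm, ← mul_assoc, ← pow_succ, ← pow_add]
      push_cast
      module
  -- the "extra" terms
  set f : ℕ → S := fun i => (c i * (((i:k)) + 2) / 2) • (x ^ (i+1) * y ^ (n - i)) with hfdef
  -- per-term expansion
  have key : ∀ i ∈ Finset.Icc 1 n,
      (x + y) * (c i • (x ^ i * y ^ (n - i))) =
        c i • (x ^ i * y ^ (n + 1 - i)) + f i := by
    intro i hi
    simp only [Finset.mem_Icc] at hi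
    have hni : n - i + 1 = n + 1 - i := by omega
    have hs : c i * (((i:k)) + 2) / 2 = c i + c i * ((i:k)/2) := by field_simp; ring
    rw [add_mul, mul_smul_comm, mul_smul_comm, ← mul_assoc x, ← pow_succ',
      ← mul_assoc y, hcomm i, add_mul, smul_mul_assoc, mul_assoc, ← pow_succ', hni,
      hfdef]
    show _ = _ + (c i * (((i:k)) + 2) / 2) • (x ^ (i+1) * y ^ (n - i))
    rw [hs]
    module
  -- recurrence for c
  have hcrec : ∀ j : ℕ, c (j+1) = -(c j * (((j:k)) + 2) / 2) := by
    intro j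
    simp only [hcdef]
    rw [Nat.factorial_succ]
    push_cast
    rw [pow_succ, pow_succ]
    field_simp
    ring
  -- reindex the shifted sum
  have hreindex : ∑ i ∈ Finset.Icc 2 n, c i • (x ^ i * y ^ (n + 1 - i)) =
      -∑ j ∈ Finset.Icc 1 (n-1), f j := by
    have hmap : Finset.Icc 2 n = Finset.map (addRightEmbedding 1) (Finset.Icc 1 (n-1)) := by
      rw [Finset.map_add_right_Icc]
      congr 1
      omega
    rw [hmap, Finset.sum_map, ← Finset.sum_neg_distrib]
    refine Finset.sum_congr rfl fun j hj => ?_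
    simp only [Finset.mem_Icc] at hj
    have h1 : addRightEmbedding 1 j = j + 1 := rfl
    have h2' : n + 1 - (j + 1) = n - j := by omega
    rw [h1, h2', hcrec j, hfdef]
    simp [neg_smul]
  -- split off bottom term i = 1
  have hsplit : ∑ i ∈ Finset.Icc 1 n, c i • (x ^ i * y ^ (n + 1 - i)) =
      c 1 • (x * y ^ n) + ∑ i ∈ Finset.Icc 2 n, c i • (x ^ i * y ^ (n + 1 - i)) := by
    have : Finset.Icc 1 n = insert 1 (Finset.Icc 2 n) := by
      ext a; simp only [Finset.mem_Icc, Finset.mem_insert]; omega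
    rw [this, Finset.sum_insert (by simp)]
    congr 1
    simp
  -- split off top term of f-sum
  have htop : ∑ i ∈ Finset.Icc 1 n, f i = ∑ i ∈ Finset.Icc 1 (n-1), f i + f n := by
    have h' : Finset.Icc 1 n = insert n (Finset.Icc 1 (n-1)) := by
      ext a; simp only [Finset.mem_Icc, Finset.mem_insert]; omega
    rw [h', Finset.sum_insert (by simp; omega), add_comm]
  have hfn : f n = 0 := by
    have : ((n:k)) + 2 = 0 := by
      have : ((p:ℕ):k) = 0 := CharP.cast_eq_zero k p
      rw [hpn] at this
      push_cast at this
      linear_combination this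
    rw [hfdef]
    simp [this]
  have hc1 : c 1 = (2:k)⁻¹ := by
    have h4 : (2:k)^2 ≠ 0 := pow_ne_zero _ h2
    simp only [hcdef]
    rw [div_eq_iff h4]
    norm_num [Nat.factorial]
    rw [show ((4:k)) = 2*2 by norm_num, ← mul_assoc, inv_mul_cancel₀ h2, one_mul]
  -- assemble
  rw [mul_add, Finset.mul_sum, Finset.sum_congr rfl key, Finset.sum_add_distrib,
    hsplit, hreindex, htop, hfn, hc1, mul_neg, add_mul, ← pow_succ']
  have hsc : (-(2:k)⁻¹) = -1 + 2⁻¹ := by field_simp; norm_num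
  have hfin : -((2:k)⁻¹ • (x * y ^ n)) = -(x * y ^ n) + (2:k)⁻¹ • (x * y ^ n) := by
    calc -((2:k)⁻¹ • (x * y ^ n)) = (-(2:k)⁻¹) • (x * y ^ n) := (neg_smul _ _).symm
      _ = ((-1 : k) + 2⁻¹) • (x * y ^ n) := by rw [hsc]
      _ = (-1 : k) • (x * y ^ n) + (2:k)⁻¹ • (x * y ^ n) := add_smul _ _ _
      _ = -(x * y ^ n) + (2:k)⁻¹ • (x * y ^ n) := by rw [neg_one_smul]
  rw [sub_eq_add_neg, hfin]
  abel
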